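/- arXiv:2103.12372 — 2 statements merged into one kernel-verified Lean document; each statement's English description precedes it below -/
import Mathlib

section
/- The higher-dimensional guiding vector field χ(ξ) = ×(∇φ_1,...,∇φ_n) − Σ_{i=1}^n k_i φ_i(ξ) ∇φ_i(ξ), with φ_j(ξ) = x_j − f_j(w) and k_i > 0, has no singular points: χ(ξ) ≠ 0 for all ξ ∈ R^{n+1}. In particular, the last component of ×(∇φ_1,...,∇φ_n) equals (−1)^n (up to sign convention), so the (n+1)-th component of χ equals (−1)^n + Σ_{l=1}^n k_l φ_l(ξ) f_l'(w), and the first n components equal (−1)^n f_j'(w) − k_j φ_j(ξ); these cannot all vanish simultaneously. -/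
open BigOperators

/-- The higher-dimensional guiding vector field
`χ(ξ) = ×(∇φ_1,…,∇φ_n) − Σ k_i φ_i(ξ) ∇φ_i(ξ)`, whose components are
`χ_j(ξ) = (−1)^n f_j'(w) − k_j φ_j(ξ)` for `j ≤ n` and
`χ_{n+1}(ξ) = (−1)^n + Σ_l k_l φ_l(ξ) f_l'(w)` (where `φ_j(ξ) = x_j − f_j(w)`),
has no singular points: `χ(ξ) ≠ 0` for all `ξ ∈ ℝ^(n+1)`. -/
theorem guiding_vector_field_nonsingular (n : ℕ) (f : Fin n → ℝ → ℝ)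
    (hf : ∀ j, ContDiff ℝ 2 (f j)) (k : Fin n → ℝ) (hk : ∀ j, 0 < k j)
    (ξ : Fin (n + 1) → ℝ) :
    (Fin.snoc
      (fun j : Fin n => (-1 : ℝ) ^ n * deriv (f j) (ξ (Fin.last n)) -
        k j * (ξ (Fin.castSucc j) - f j (ξ (Fin.last n))))
      ((-1 : ℝ) ^ n + ∑ l : Fin n,
        k l * (ξ (Fin.castSucc l) - f l (ξ (Fin.last n))) *
          deriv (f l) (ξ (Fin.last n))) : Fin (n + 1) → ℝ) ≠ 0 := by
  intro h
  set w := ξ (Fin.last n) with hw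
  have hlast := congrFun h (Fin.last n)
  have hcast : ∀ j : Fin n,
      (-1 : ℝ) ^ n * deriv (f j) w - k j * (ξ (Fin.castSucc j) - f j w) = 0 := by
    intro j
    have := congrFun h (Fin.castSucc j)
    simpa using this
  simp only [Fin.snoc_last, Pi.zero_apply] at hlast
  have hsum : ∀ l : Fin n,
      k l * (ξ (Fin.castSucc l) - f l w) * deriv (f l) w
        = (-1 : ℝ) ^ n * (deriv (f l) w) ^ 2 := by
    intro l
    have := hcast l
    have h1 : k l * (ξ (Fin.castSucc l) - f l w) = (-1 : ℝ) ^ n * deriv (f l) w := by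
      linarith
    rw [h1]; ring
  rw [Finset.sum_congr rfl (fun l _ => hsum l)] at hlast
  rw [← Finset.mul_sum] at hlast
  have hpos : (0 : ℝ) < 1 + ∑ l : Fin n, (deriv (f l) w) ^ 2 := by
    positivity
  have hfac : (-1 : ℝ) ^ n * (1 + ∑ l : Fin n, (deriv (f l) w) ^ 2) = 0 := by
    rw [mul_add, mul_one]; exact hlast
  rcases mul_eq_zero.mp hfac with h1 | h2
  · exact (pow_ne_zero n (by norm_num : (-1 : ℝ) ≠ 0)) h1
  · linarith
end

section
/- Orientation alignment under saturated control: let σ : [0,∞) → (−π, π) be a C^1 solution of σ̇ = Sat_a^b(θ̇^d − k sin σ) − θ̇^d, where k > 0, a < 0 < b, and assume (i) whenever the argument exceeds b (upper saturation) we have σ ∈ [0, π), and (ii) whenever the argument is below a (lower saturation) we have σ ∈ (−π, 0]. Then V(σ) = 1 − cos σ is nonincreasing along the solution, and σ(t) → 0 as t → ∞. -/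
/-- Helper: if `f` has nonpositive derivative on `[c, ∞)`, it is nonincreasing there. -/
lemma antitone_aux {f f' : ℝ → ℝ} {c : ℝ}
    (hd : ∀ x, c ≤ x → HasDerivAt f (f' x) x)
    (h0 : ∀ x, c ≤ x → f' x ≤ 0) :
    ∀ s t, c ≤ s → s ≤ t → f t ≤ f s := by
  have hA : AntitoneOn f (Set.Ici c) := by
    apply antitoneOn_of_deriv_nonpos (convex_Ici c)
    · intro x hx
      exact ((hd x hx).continuousAt).continuousWithinAt
    · intro x hx
      rw [interior_Ici] at hx
      exact ((hd x (le_of_lt hx)).differentiableAt).differentiableWithinAt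
    · intro x hx
      rw [interior_Ici] at hx
      rw [(hd x (le_of_lt hx)).deriv]
      exact h0 x (le_of_lt hx)
  intro s t hs hst
  exact hA hs (le_trans hs hst) hst

/-- Orientation alignment under saturated control: if `σ : [0,∞) → (−π, π)` solves
`σ̇ = Sat_a^b(θ̇ᵈ − k sin σ) − θ̇ᵈ` with `k > 0`, `a < 0 < b`, and `σ ∈ [0, π)`
during upper saturation while `σ ∈ (−π, 0]` during lower saturation, then
`V(σ) = 1 − cos σ` is nonincreasing along the solution and `σ(t) → 0` as `t → ∞`. -/
theorem saturated_alignment_convergence (k a b : ℝ) (hk : 0 < k)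
    (ha : a < 0) (hb : 0 < b) (θd : ℝ → ℝ) (hθd : Continuous θd) (σ : ℝ → ℝ)
    (hrange : ∀ t, 0 ≤ t → σ t ∈ Set.Ioo (-Real.pi) Real.pi)
    (hode : ∀ t, 0 ≤ t → HasDerivAt σ
      (max a (min b (θd t - k * Real.sin (σ t))) - θd t) t)
    (hupper : ∀ t, 0 ≤ t → b < θd t - k * Real.sin (σ t) →
      σ t ∈ Set.Ico 0 Real.pi)
    (hlower : ∀ t, 0 ≤ t → θd t - k * Real.sin (σ t) < a →
      σ t ∈ Set.Ioc (-Real.pi) 0) :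
    (∀ s t, 0 ≤ s → s ≤ t →
      1 - Real.cos (σ t) ≤ 1 - Real.cos (σ s)) ∧
    Filter.Tendsto σ Filter.atTop (nhds 0) := by
  set d : ℝ → ℝ := fun t => max a (min b (θd t - k * Real.sin (σ t))) - θd t with hd_def
  -- key pointwise inequality: sin(σ t) * d t ≤ -k * sin(σ t)^2
  have key : ∀ t, 0 ≤ t → Real.sin (σ t) * d t ≤ -k * Real.sin (σ t) ^ 2 := by
    intro t ht
    set u := θd t - k * Real.sin (σ t) with hu
    rcases lt_or_ge b u with hbu | hub
    · -- upper saturation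
      have hsat : max a (min b u) = b := by
        rw [min_eq_left hbu.le, max_eq_right (le_of_lt (ha.trans hb))]
      have hσ := hupper t ht hbu
      have hsin : 0 ≤ Real.sin (σ t) :=
        Real.sin_nonneg_of_nonneg_of_le_pi hσ.1 hσ.2.le
      have hdle : d t ≤ -k * Real.sin (σ t) := by
        simp only [hd_def, ← hu, hsat]; nlinarith
      nlinarith [mul_le_mul_of_nonneg_left hdle hsin]
    · rcases lt_or_ge u a with hua | hau
      · -- lower saturation
        have hsat : max a (min b u) = a := by
          rw [min_eq_right (hua.le.trans (ha.trans hb).le), max_eq_left hua.le]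
        have hσ := hlower t ht hua
        have hsin : Real.sin (σ t) ≤ 0 :=
          Real.sin_nonpos_of_nonpos_of_neg_pi_le hσ.2 hσ.1.le
        have hdge : -k * Real.sin (σ t) ≤ d t := by
          simp only [hd_def, ← hu, hsat]; nlinarith
        nlinarith [mul_le_mul_of_nonpos_left hdge hsin]
      · -- no saturation
        have hsat : max a (min b u) = u := by
          rw [min_eq_right hub, max_eq_right hau]
        have : d t = -k * Real.sin (σ t) := by
          simp only [hd_def, ← hu, hsat]; ring
        rw [this]; exact le_of_eq (by ring)
  -- V and its derivative
  set V : ℝ → ℝ := fun t => 1 - Real.cos (σ t) with hV_def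
  have hVd : ∀ t, 0 ≤ t → HasDerivAt V (Real.sin (σ t) * d t) t := by
    intro t ht
    have h1 : HasDerivAt (fun s => Real.cos (σ s)) (-Real.sin (σ t) * d t) t :=
      (hode t ht).cos
    have h2 : HasDerivAt V (-(-Real.sin (σ t) * d t)) t := h1.const_sub 1
    convert h2 using 1
    ring
  -- Part 1: V nonincreasing
  have part1 : ∀ s t, 0 ≤ s → s ≤ t → V t ≤ V s := by
    apply antitone_aux hVd
    intro t ht
    have := key t ht
    nlinarith [sq_nonneg (Real.sin (σ t))]
  -- basic bounds
  have hVnonneg : ∀ t, V t ≥ 0 := by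
    intro t; simp only [hV_def]; nlinarith [Real.cos_le_one (σ t)]
  have hcos0 : -1 < Real.cos (σ 0) := by
    have h0 := hrange 0 le_rfl
    have habs : |σ 0| < Real.pi := abs_lt.2 ⟨h0.1, h0.2⟩
    have := Real.strictAntiOn_cos ⟨abs_nonneg _, habs.le⟩
      ⟨Real.pi_pos.le, le_rfl⟩ habs
    rw [Real.cos_abs, Real.cos_pi] at this
    -- this : cos π < cos (σ 0) after rewriting? careful
    linarith [this]
  set L : ℝ := k * (1 + Real.cos (σ 0)) with hL_def
  have hLpos : 0 < L := by
    apply mul_pos hk; linarith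
  -- exponential decay: V t ≤ V 0 * exp (-L * t)
  set g : ℝ → ℝ := fun t => V t * Real.exp (L * t) with hg_def
  have hgd : ∀ t, 0 ≤ t → HasDerivAt g
      (Real.sin (σ t) * d t * Real.exp (L * t) + V t * (L * Real.exp (L * t))) t := by
    intro t ht
    have he : HasDerivAt (fun s => Real.exp (L * s)) (L * Real.exp (L * t)) t := by
      have : HasDerivAt (fun s : ℝ => L * s) L t := by
        simpa using (hasDerivAt_id t).const_mul L
      simpa [mul_comm] using this.exp
    exact (hVd t ht).mul he
  have hgdec : ∀ s t, 0 ≤ s → s ≤ t → g t ≤ g s := by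
    apply antitone_aux hgd
    intro t ht
    have hkey := key t ht
    have hVle : V t ≤ V 0 := part1 0 t le_rfl ht
    have hVnn := hVnonneg t
    have hsq : Real.sin (σ t) ^ 2 = V t * (2 - V t) := by
      simp only [hV_def]
      nlinarith [Real.sin_sq_add_cos_sq (σ t)]
    have hexp : 0 < Real.exp (L * t) := Real.exp_pos _
    have hmain : Real.sin (σ t) * d t + V t * L ≤ 0 := by
      have hV0 : V 0 = 1 - Real.cos (σ 0) := rfl
      have hLval : L = k * (2 - V 0) := by rw [hL_def, hV0]; ring
      have h1 : Real.sin (σ t) * d t ≤ -k * (V t * (2 - V t)) := by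
        rw [← hsq]; exact hkey
      have h2 : k * (V t * (2 - V 0)) ≤ k * (V t * (2 - V t)) := by
        apply mul_le_mul_of_nonneg_left _ hk.le
        exact mul_le_mul_of_nonneg_left (by linarith) hVnn
      rw [hLval]
      nlinarith [h1, h2]
    nlinarith [mul_le_mul_of_nonneg_right hmain hexp.le]
  have hdecay : ∀ t, 0 ≤ t → V t ≤ V 0 * Real.exp (-L * t) := by
    intro t ht
    have := hgdec 0 t le_rfl ht
    simp only [hg_def, mul_zero, Real.exp_zero, mul_one] at this
    have hexp : 0 < Real.exp (L * t) := Real.exp_pos _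
    rw [neg_mul, Real.exp_neg, ← div_eq_mul_inv, le_div_iff₀ hexp]
    linarith [this]
  -- V tends to 0
  have hVtend : Filter.Tendsto V Filter.atTop (nhds 0) := by
    have hup : Filter.Tendsto (fun t => V 0 * Real.exp (-L * t)) Filter.atTop (nhds 0) := by
      have : Filter.Tendsto (fun t : ℝ => Real.exp (-L * t)) Filter.atTop (nhds 0) := by
        apply Real.tendsto_exp_atBot.comp
        exact Filter.tendsto_id.const_mul_atTop_of_neg (by linarith)
      simpa using this.const_mul (V 0)
    apply squeeze_zero' (g := fun t => V 0 * Real.exp (-L * t))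
    · filter_upwards [Filter.eventually_ge_atTop (0:ℝ)] with t ht
      exact hVnonneg t
    · filter_upwards [Filter.eventually_ge_atTop (0:ℝ)] with t ht
      exact hdecay t ht
    · exact hup
  -- conclude σ → 0
  have part2 : Filter.Tendsto σ Filter.atTop (nhds 0) := by
    rw [Metric.tendsto_atTop]
    intro ε hε
    set ε' := min ε (Real.pi / 2) with hε'
    have hε'pos : 0 < ε' := lt_min hε (by positivity)
    have hε'le : ε' ≤ Real.pi / 2 := min_le_right _ _
    have hε'ltpi : ε' ≤ Real.pi := hε'le.trans (by linarith [Real.pi_pos])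
    have hcosε' : Real.cos ε' < 1 := by
      have := Real.strictAntiOn_cos ⟨le_rfl, Real.pi_pos.le⟩
        ⟨hε'pos.le, hε'ltpi⟩ hε'pos
      rwa [Real.cos_zero] at this
    have hδ : 0 < 1 - Real.cos ε' := by linarith
    have := (Metric.tendsto_atTop.1 hVtend) (1 - Real.cos ε') hδ
    obtain ⟨N, hN⟩ := this
    refine ⟨max N 0, fun t ht => ?_⟩
    have htN : N ≤ t := le_trans (le_max_left _ _) ht
    have ht0 : (0:ℝ) ≤ t := le_trans (le_max_right _ _) ht
    have hVt := hN t htN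
    rw [Real.dist_eq, sub_zero] at hVt
    have hVabs : V t < 1 - Real.cos ε' := by
      have := hVnonneg t
      rwa [abs_of_nonneg (hVnonneg t)] at hVt
    have hcos : Real.cos ε' < Real.cos (σ t) := by
      simp only [hV_def] at hVabs; linarith
    have hrt := hrange t ht0
    have habs : |σ t| < Real.pi := abs_lt.2 ⟨hrt.1, hrt.2⟩
    have habslt : |σ t| < ε' := by
      by_contra hcon
      push_neg at hcon
      have : Real.cos (σ t) ≤ Real.cos ε' := by
        rcases eq_or_lt_of_le hcon with heq | hlt
        · rw [← Real.cos_abs, ← heq]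
        · have := Real.strictAntiOn_cos ⟨hε'pos.le, hε'ltpi⟩
            ⟨abs_nonneg _, habs.le⟩ hlt
          rw [Real.cos_abs] at this
          exact this.le
      linarith
    rw [Real.dist_eq, sub_zero]
    exact lt_of_lt_of_le habslt (min_le_left _ _)
  exact ⟨part1, part2⟩
end
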